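/- The function H is convex on (0, ψ(x_s)] and concave on [ψ(x_s), +∞). -/

import Mathlib

open Real MeasureTheory Set Filter Topology

lemma J_integrableOn {q : ℝ} (hq : -1 < q) (c : ℝ) :
    IntegrableOn (fun u : ℝ => u ^ q * Real.exp (c * u - u ^ 2 / 2)) (Ioi 0) := by
  have hmeas : AEStronglyMeasurable (fun u : ℝ => u ^ q * Real.exp (c * u - u ^ 2 / 2))
      (volume.restrict (Ioi 0)) := by
    apply ContinuousOn.aestronglyMeasurable ?_ measurableSet_Ioi
    intro u hu
    exact ((Real.continuousAt_rpow_const u q (Or.inl (ne_of_gt hu))).continuousWithinAt.mul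
      (Real.continuous_exp.comp (by continuity)).continuousWithinAt)
  have hbig := (integrableOn_rpow_mul_exp_neg_mul_sq (b := (1:ℝ)/4) (by norm_num) hq).const_mul
      (Real.exp (c ^ 2))
  refine Integrable.mono hbig hmeas ?_
  filter_upwards [ae_restrict_mem measurableSet_Ioi] with u hu
  have hu0 : (0:ℝ) < u := hu
  have h1 : (0:ℝ) < u ^ q := Real.rpow_pos_of_pos hu0 q
  have h2 : c * u - u ^ 2 / 2 ≤ c ^ 2 + -(1/4) * u ^ 2 := by nlinarith [sq_nonneg (c - u/2)]
  rw [Real.norm_of_nonneg (by positivity), Real.norm_of_nonneg (by positivity)]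
  calc u ^ q * Real.exp (c * u - u ^ 2 / 2)
      ≤ u ^ q * Real.exp (c ^ 2 + -(1/4) * u ^ 2) := by
        exact mul_le_mul_of_nonneg_left (Real.exp_le_exp.2 h2) h1.le
    _ = Real.exp (c ^ 2) * (u ^ q * Real.exp (-(1/4) * u ^ 2)) := by
        rw [Real.exp_add]; ring

lemma J_pos {q : ℝ} (hq : -1 < q) (c : ℝ) :
    0 < ∫ u in Ioi (0:ℝ), u ^ q * Real.exp (c * u - u ^ 2 / 2) := by
  have hnn : 0 ≤ᵐ[volume.restrict (Ioi (0:ℝ))]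
      (fun u : ℝ => u ^ q * Real.exp (c * u - u ^ 2 / 2)) := by
    filter_upwards [ae_restrict_mem measurableSet_Ioi] with u hu
    have : (0:ℝ) < u := hu
    positivity
  rw [setIntegral_pos_iff_support_of_nonneg_ae hnn (J_integrableOn hq c)]
  have hsub : Ioi (0:ℝ) ⊆ Function.support (fun u : ℝ => u ^ q * Real.exp (c * u - u ^ 2 / 2)) ∩ Ioi 0 := by
    intro u hu
    have hu0 : (0:ℝ) < u := hu
    refine ⟨?_, hu⟩
    simp only [Function.mem_support]
    positivity
  refine lt_of_lt_of_le ?_ (measure_mono hsub)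
  simp


lemma J_meas {q : ℝ} (hq : -1 < q) (c : ℝ) :
    AEStronglyMeasurable (fun u : ℝ => u ^ q * Real.exp (c * u - u ^ 2 / 2))
      (volume.restrict (Ioi 0)) := (J_integrableOn hq c).aestronglyMeasurable

lemma J_hasDerivAt {q : ℝ} (hq : -1 < q) (c₀ : ℝ) :
    HasDerivAt (fun c : ℝ => ∫ u in Ioi (0:ℝ), u ^ q * Real.exp (c * u - u ^ 2 / 2))
      (∫ u in Ioi (0:ℝ), u ^ (q + 1) * Real.exp (c₀ * u - u ^ 2 / 2)) c₀ := by
  have hq1 : (-1:ℝ) < q + 1 := by linarith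
  have key := hasDerivAt_integral_of_dominated_loc_of_deriv_le
    (μ := volume.restrict (Ioi (0:ℝ)))
    (F := fun c u => u ^ q * Real.exp (c * u - u ^ 2 / 2))
    (F' := fun c u => u ^ (q + 1) * Real.exp (c * u - u ^ 2 / 2))
    (x₀ := c₀) (s := Metric.ball c₀ 1)
    (bound := fun u => u ^ (q + 1) * Real.exp ((|c₀| + 1) * u - u ^ 2 / 2))
    (Metric.ball_mem_nhds c₀ one_pos)
    (Eventually.of_forall fun c => J_meas hq c)
    (J_integrableOn hq c₀)
    (J_meas hq1 c₀)
    ?_ (J_integrableOn hq1 (|c₀| + 1)) ?_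
  · exact key.2
  · filter_upwards [ae_restrict_mem measurableSet_Ioi] with u hu x hx
    have hu0 : (0:ℝ) < u := hu
    have h1 : (0:ℝ) < u ^ (q + 1) := Real.rpow_pos_of_pos hu0 _
    rw [Real.norm_of_nonneg (by positivity)]
    have hxle : x ≤ |c₀| + 1 := by
      have := abs_sub_abs_le_abs_sub x c₀
      have hb : |x - c₀| < 1 := by simpa [Real.dist_eq] using hx
      have : |x| ≤ |c₀| + 1 := by linarith
      linarith [le_abs_self x]
    have : x * u - u ^ 2 / 2 ≤ (|c₀| + 1) * u - u ^ 2 / 2 := by nlinarith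
    exact mul_le_mul_of_nonneg_left (Real.exp_le_exp.2 this) h1.le
  · filter_upwards [ae_restrict_mem measurableSet_Ioi] with u hu x _
    have hu0 : (0:ℝ) < u := hu
    have hinner : HasDerivAt (fun x : ℝ => x * u - u ^ 2 / 2) u x := by
      simpa using ((hasDerivAt_id x).mul_const u).sub_const (u ^ 2 / 2)
    have hexp := hinner.exp
    have := hexp.const_mul (u ^ q)
    have hrw : u ^ q * (Real.exp (x * u - u ^ 2 / 2) * u) = u ^ (q + 1) * Real.exp (x * u - u ^ 2 / 2) := by
      rw [Real.rpow_add_one hu0.ne']; ring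
    simpa [hrw] using this

lemma J_ibp {q : ℝ} (hq : 0 < q) (c : ℝ) :
    ∫ u in Ioi (0:ℝ), u ^ (q + 1) * Real.exp (c * u - u ^ 2 / 2)
      = q * (∫ u in Ioi (0:ℝ), u ^ (q - 1) * Real.exp (c * u - u ^ 2 / 2))
        + c * ∫ u in Ioi (0:ℝ), u ^ q * Real.exp (c * u - u ^ 2 / 2) := by
  have hqm : (-1:ℝ) < q - 1 := by linarith
  have hq0 : (-1:ℝ) < q := by linarith
  have hq1 : (-1:ℝ) < q + 1 := by linarith
  set f : ℝ → ℝ := fun u => u ^ q * Real.exp (c * u - u ^ 2 / 2) with hf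
  set f' : ℝ → ℝ := fun u =>
    q * (u ^ (q - 1) * Real.exp (c * u - u ^ 2 / 2))
      + c * (u ^ q * Real.exp (c * u - u ^ 2 / 2))
      - u ^ (q + 1) * Real.exp (c * u - u ^ 2 / 2) with hf'
  have hint1 := J_integrableOn hqm c
  have hint2 := J_integrableOn hq0 c
  have hint3 := J_integrableOn hq1 c
  have hf'int : IntegrableOn f' (Ioi 0) :=
    ((hint1.const_mul q).add (hint2.const_mul c)).sub hint3
  have hderiv : ∀ u ∈ Ioi (0:ℝ), HasDerivAt f (f' u) u := by
    intro u hu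
    have hu0 : (0:ℝ) < u := hu
    have h1 : HasDerivAt (fun u : ℝ => u ^ q) (q * u ^ (q - 1)) u :=
      Real.hasDerivAt_rpow_const (Or.inl hu0.ne')
    have hinner : HasDerivAt (fun u : ℝ => c * u - u ^ 2 / 2) (c - u) u := by
      have := ((hasDerivAt_id u).const_mul c).sub ((hasDerivAt_pow 2 u).div_const 2)
      simpa [mul_comm, Pi.sub_def] using this
    have h2 := hinner.exp
    have := h1.mul h2
    have hrw : u ^ (q + 1) = u ^ q * u := Real.rpow_add_one hu0.ne' q
    refine this.congr_deriv ?_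
    rw [hf']; simp only []
    rw [hrw]; ring
  have hcont : ContinuousWithinAt f (Ici 0) 0 := by
    apply ContinuousAt.continuousWithinAt
    exact (Real.continuousAt_rpow_const 0 q (Or.inr hq.le)).mul
      (Real.continuous_exp.comp (by continuity)).continuousAt
  have htend : Tendsto f atTop (𝓝 0) := by
    apply tendsto_of_tendsto_of_tendsto_of_le_of_le' (g := fun _ => (0:ℝ))
      (h := fun u : ℝ => Real.exp (-u)) tendsto_const_nhds
      (Real.tendsto_exp_neg_atTop_nhds_zero)
    · filter_upwards [eventually_gt_atTop (0:ℝ)] with u hu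
      positivity
    · filter_upwards [eventually_ge_atTop (max 1 (2 * (q + c + 1)))] with u hu
      have hu1 : (1:ℝ) ≤ u := le_trans (le_max_left _ _) hu
      have hu2 : 2 * (q + c + 1) ≤ u := le_trans (le_max_right _ _) hu
      have hu0 : (0:ℝ) < u := by linarith
      have hlog : Real.log u ≤ u := (Real.log_le_sub_one_of_pos hu0).trans (by linarith)
      have : f u = Real.exp (q * Real.log u + (c * u - u ^ 2 / 2)) := by
        rw [hf]; simp only []
        rw [Real.exp_add, Real.rpow_def_of_pos hu0, mul_comm (Real.log u) q]
      rw [this]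
      apply Real.exp_le_exp.2
      have : q * Real.log u ≤ q * u := mul_le_mul_of_nonneg_left hlog hq.le
      nlinarith
  have hzero : f 0 = 0 := by
    rw [hf]; simp only []
    rw [Real.zero_rpow hq.ne', zero_mul]
  have := integral_Ioi_of_hasDerivAt_of_tendsto hcont hderiv hf'int htend
  rw [hzero, sub_zero] at this
  have hsplit : ∫ u in Ioi (0:ℝ), f' u
      = q * (∫ u in Ioi (0:ℝ), u ^ (q - 1) * Real.exp (c * u - u ^ 2 / 2))
        + c * (∫ u in Ioi (0:ℝ), u ^ q * Real.exp (c * u - u ^ 2 / 2))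
        - ∫ u in Ioi (0:ℝ), u ^ (q + 1) * Real.exp (c * u - u ^ 2 / 2) := by
    simp only [hf']
    have h12 : Integrable (fun u : ℝ => q * (u ^ (q - 1) * Real.exp (c * u - u ^ 2 / 2))
        + c * (u ^ q * Real.exp (c * u - u ^ 2 / 2))) (volume.restrict (Ioi 0)) :=
      (hint1.const_mul q).add (hint2.const_mul c)
    rw [integral_sub h12 hint3,
      integral_add (hint1.const_mul q) (hint2.const_mul c),
      integral_const_mul, integral_const_mul]
  rw [this] at hsplit
  linarith

noncomputable def Jfun (q c : ℝ) : ℝ := ∫ u in Ioi (0:ℝ), u ^ q * Real.exp (c * u - u ^ 2 / 2)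

lemma Jfun_pos {q : ℝ} (hq : -1 < q) (c : ℝ) : 0 < Jfun q c := J_pos hq c

lemma Jfun_hasDerivAt {q : ℝ} (hq : -1 < q) (c₀ : ℝ) :
    HasDerivAt (Jfun q) (Jfun (q + 1) c₀) c₀ := J_hasDerivAt hq c₀

lemma div_sq_mul_inv (n w g : ℝ) (hw : w ≠ 0) (hg : g ≠ 0) :
    n / g ^ 2 * (w / g ^ 2)⁻¹ = n / w := by
  field_simp

lemma Jfun_ibp {q : ℝ} (hq : 0 < q) (c : ℝ) :
    Jfun (q + 1) c = q * Jfun (q - 1) c + c * Jfun q c := J_ibp hq c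

/-- H is convex on (0, ψ(x_s)] and concave on [ψ(x_s), +∞). -/
theorem stmt12
    (μ σ θ r c_s c_b : ℝ)
    (hμ : 0 < μ) (hσ : 0 < σ) (hr : 0 < r) (hcs : 0 < c_s) (hcb : 0 < c_b)
    (F G : ℝ → ℝ)
    (hF : ∀ x : ℝ, F x = ∫ u in Ioi (0:ℝ),
        u ^ (r / μ - 1) * Real.exp (Real.sqrt (2 * μ / σ ^ 2) * (x - θ) * u - u ^ 2 / 2))
    (hG : ∀ x : ℝ, G x = ∫ u in Ioi (0:ℝ),
        u ^ (r / μ - 1) * Real.exp (Real.sqrt (2 * μ / σ ^ 2) * (θ - x) * u - u ^ 2 / 2))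
    (ψ : ℝ → ℝ) (hψ : ∀ x, ψ x = F x / G x)
    (ψinv : ℝ → ℝ)
    (hinv_left : ∀ x : ℝ, ψinv (ψ x) = x)
    (hinv_right : ∀ z : ℝ, 0 < z → ψ (ψinv z) = z)
    (H : ℝ → ℝ)
    (hH : ∀ z : ℝ, 0 < z → H z = (Real.exp (ψinv z) - c_s) / G (ψinv z))
    (hH0 : H 0 = 0)
    (f_s : ℝ → ℝ)
    (hfs : ∀ x : ℝ, f_s x = (μ * θ + σ ^ 2 / 2 - r) - μ * x + r * c_s * Real.exp (-x))
    (x_s : ℝ) (hxs : f_s x_s = 0) (hxs_uniq : ∀ y, f_s y = 0 → y = x_s) :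
    ConvexOn ℝ (Ioc (0:ℝ) (ψ x_s)) H ∧ ConcaveOn ℝ (Ici (ψ x_s)) H := by
  have hσ2 : (0:ℝ) < σ ^ 2 := by positivity
  set α := Real.sqrt (2 * μ / σ ^ 2) with hαdef
  have hα : 0 < α := Real.sqrt_pos.2 (by positivity)
  have hα2 : α ^ 2 = 2 * μ / σ ^ 2 := Real.sq_sqrt (by positivity)
  set p := r / μ with hpdef
  have hp : 0 < p := by positivity
  have hp1 : (-1:ℝ) < p - 1 := by linarith
  have hp0 : (-1:ℝ) < p := by linarith
  have hp2 : (-1:ℝ) < p + 1 := by linarith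
  -- function identifications
  have hFfun : F = fun x => Jfun (p - 1) (α * (x - θ)) := by
    funext x; rw [hF x]; rfl
  have hGfun : G = fun x => Jfun (p - 1) (α * (θ - x)) := by
    funext x; rw [hG x]; rfl
  -- derivative functions
  set Fd : ℝ → ℝ := fun x => α * Jfun p (α * (x - θ)) with hFdDef
  set Gd : ℝ → ℝ := fun x => -(α * Jfun p (α * (θ - x))) with hGdDef
  set Fdd : ℝ → ℝ := fun x => α ^ 2 * Jfun (p + 1) (α * (x - θ)) with hFddDef
  set Gdd : ℝ → ℝ := fun x => α ^ 2 * Jfun (p + 1) (α * (θ - x)) with hGddDef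
  -- positivity
  have hFpos : ∀ x, 0 < F x := by
    intro x; rw [hFfun]; exact Jfun_pos hp1 _
  have hGpos : ∀ x, 0 < G x := by
    intro x; rw [hGfun]; exact Jfun_pos hp1 _
  have hFdpos : ∀ x, 0 < Fd x := by
    intro x; rw [hFdDef]; exact mul_pos hα (Jfun_pos hp0 _)
  have hGdneg : ∀ x, Gd x < 0 := by
    intro x; rw [hGdDef]; simp only [neg_lt, neg_zero]
    exact mul_pos hα (Jfun_pos hp0 _)
  set W : ℝ → ℝ := fun x => Fd x * G x - F x * Gd x with hWDef
  have hWpos : ∀ x, 0 < W x := by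
    intro x; rw [hWDef]; simp only []
    have h1 := hFdpos x; have h2 := hGpos x; have h3 := hFpos x; have h4 := hGdneg x
    nlinarith
  -- derivatives
  have hFd' : ∀ x, HasDerivAt F (Fd x) x := by
    intro x
    have h2 : HasDerivAt (fun y : ℝ => α * (y - θ)) α x := by
      simpa using ((hasDerivAt_id x).sub_const θ).const_mul α
    have h1 : HasDerivAt (Jfun (p - 1)) (Jfun p (α * (x - θ))) (α * (x - θ)) := by
      have := Jfun_hasDerivAt hp1 (α * (x - θ))
      rwa [show p - 1 + 1 = p by ring] at this
    have h3 := h1.comp x h2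
    rw [hFfun, hFdDef]
    simpa [Function.comp_def, mul_comm] using h3
  have hGd' : ∀ x, HasDerivAt G (Gd x) x := by
    intro x
    have h2 : HasDerivAt (fun y : ℝ => α * (θ - y)) (-α) x := by
      simpa using ((hasDerivAt_id x).const_sub θ).const_mul α
    have h1 : HasDerivAt (Jfun (p - 1)) (Jfun p (α * (θ - x))) (α * (θ - x)) := by
      have := Jfun_hasDerivAt hp1 (α * (θ - x))
      rwa [show p - 1 + 1 = p by ring] at this
    have h3 := h1.comp x h2
    have hval : Jfun p (α * (θ - x)) * (-α) = -(α * Jfun p (α * (θ - x))) := by ring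
    rw [hGfun]
    have h4 := hval ▸ h3
    exact h4
  have hFdd' : ∀ x, HasDerivAt Fd (Fdd x) x := by
    intro x
    have h2 : HasDerivAt (fun y : ℝ => α * (y - θ)) α x := by
      simpa using ((hasDerivAt_id x).sub_const θ).const_mul α
    have h1 : HasDerivAt (Jfun p) (Jfun (p + 1) (α * (x - θ))) (α * (x - θ)) :=
      Jfun_hasDerivAt hp0 (α * (x - θ))
    have h3 := (h1.comp x h2).const_mul α
    have hval : α * (Jfun (p + 1) (α * (x - θ)) * α) = α ^ 2 * Jfun (p + 1) (α * (x - θ)) := by ring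
    have h4 := hval ▸ h3
    exact h4
  have hGdd' : ∀ x, HasDerivAt Gd (Gdd x) x := by
    intro x
    have h2 : HasDerivAt (fun y : ℝ => α * (θ - y)) (-α) x := by
      simpa using ((hasDerivAt_id x).const_sub θ).const_mul α
    have h1 : HasDerivAt (Jfun p) (Jfun (p + 1) (α * (θ - x))) (α * (θ - x)) :=
      Jfun_hasDerivAt hp0 (α * (θ - x))
    have h3 := ((h1.comp x h2).const_mul α).neg
    have hval : -(α * (Jfun (p + 1) (α * (θ - x)) * -α)) = α ^ 2 * Jfun (p + 1) (α * (θ - x)) := by ring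
    have h4 := hval ▸ h3
    exact h4
  -- ODE relations
  have hFddEq : ∀ x, Fdd x = α ^ 2 * (x - θ) * Fd x + α ^ 2 * p * F x := by
    intro x
    rw [hFddDef, hFdDef, hFfun]
    simp only []
    rw [Jfun_ibp hp (α * (x - θ))]
    ring
  have hGddEq : ∀ x, Gdd x = α ^ 2 * (x - θ) * Gd x + α ^ 2 * p * G x := by
    intro x
    rw [hGddDef, hGdDef, hGfun]
    simp only []
    rw [Jfun_ibp hp (α * (θ - x))]
    ring
  -- ψ
  have hψfun : ψ = fun x => F x / G x := funext hψ
  have hψd : ∀ x, HasDerivAt ψ (W x / (G x) ^ 2) x := by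
    intro x
    rw [hψfun, hWDef]
    exact (hFd' x).div (hGd' x) (hGpos x).ne'
  have hψpos : ∀ x, 0 < ψ x := by
    intro x; rw [hψ x]; exact div_pos (hFpos x) (hGpos x)
  have hψmono : StrictMono ψ := by
    apply strictMono_of_deriv_pos
    intro x
    rw [(hψd x).deriv]
    exact div_pos (hWpos x) (pow_pos (hGpos x) 2)
  -- continuity of ψinv at positive points
  have hinvcont : ∀ z : ℝ, 0 < z → ContinuousAt ψinv z := by
    intro z hz
    rw [ContinuousAt]
    apply tendsto_order.2
    constructor
    · intro a ha
      have h1 : ψ a < z := by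
        have := hψmono ha
        rwa [hinv_right z hz] at this
      filter_upwards [Ioi_mem_nhds h1] with y hy
      have hy0 : 0 < y := lt_trans (hψpos a) hy
      by_contra hc
      push_neg at hc
      have : y ≤ ψ a := by
        calc y = ψ (ψinv y) := (hinv_right y hy0).symm
        _ ≤ ψ a := hψmono.monotone hc
      exact absurd this (not_le.2 hy)
    · intro a ha
      have h1 : z < ψ a := by
        have := hψmono ha
        rwa [hinv_right z hz] at this
      filter_upwards [Ioo_mem_nhds hz h1] with y hy
      obtain ⟨hy0, hy2⟩ := hy
      by_contra hc
      push_neg at hc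
      have : ψ a ≤ y := by
        calc ψ a ≤ ψ (ψinv y) := hψmono.monotone hc
        _ = y := hinv_right y hy0
      exact absurd this (not_le.2 hy2)
  -- derivative of ψinv
  have hψinvd : ∀ z : ℝ, 0 < z →
      HasDerivAt ψinv ((W (ψinv z) / (G (ψinv z)) ^ 2)⁻¹) z := by
    intro z hz
    apply HasDerivAt.of_local_left_inverse (hinvcont z hz) (hψd (ψinv z))
      (ne_of_gt (div_pos (hWpos _) (pow_pos (hGpos _) 2)))
    filter_upwards [Ioi_mem_nhds hz] with y hy
    exact hinv_right y hy
  -- first derivative of H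
  set Nn : ℝ → ℝ := fun x => Real.exp x * G x - (Real.exp x - c_s) * Gd x with hNnDef
  set D1 : ℝ → ℝ := fun x => Nn x / W x with hD1Def
  have hHd : ∀ z : ℝ, 0 < z → HasDerivAt H (D1 (ψinv z)) z := by
    intro z hz
    set x := ψinv z with hxdef
    have hKd : HasDerivAt (fun y => (Real.exp y - c_s) / G y)
        (((Real.exp x) * G x - (Real.exp x - c_s) * Gd x) / (G x) ^ 2) x :=
      ((Real.hasDerivAt_exp x).sub_const c_s).div (hGd' x) (hGpos x).ne'
    have hcomp := hKd.comp z (hψinvd z hz)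
    have hev : H =ᶠ[𝓝 z] (fun y => (Real.exp y - c_s) / G y) ∘ ψinv := by
      filter_upwards [Ioi_mem_nhds hz] with y hy
      exact hH y hy
    have := hcomp.congr_of_eventuallyEq hev
    have hG0 : G x ≠ 0 := (hGpos x).ne'
    have hW0 : W x ≠ 0 := (hWpos x).ne'
    have key := div_sq_mul_inv (Real.exp x * G x - (Real.exp x - c_s) * Gd x) (W x) (G x) hW0 hG0
    show HasDerivAt H ((Real.exp x * G x - (Real.exp x - c_s) * Gd x) / W x) z
    rw [← key]
    exact this
  -- second derivative of H
  have hH2 : ∀ z : ℝ, 0 < z → HasDerivAt (deriv H)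
      (((Real.exp (ψinv z) * G (ψinv z) + Real.exp (ψinv z) * Gd (ψinv z) -
          (Real.exp (ψinv z) * Gd (ψinv z) + (Real.exp (ψinv z) - c_s) * Gdd (ψinv z))) * W (ψinv z) -
        Nn (ψinv z) * (Fdd (ψinv z) * G (ψinv z) + Fd (ψinv z) * Gd (ψinv z) -
          (Fd (ψinv z) * Gd (ψinv z) + F (ψinv z) * Gdd (ψinv z)))) / (W (ψinv z)) ^ 2 *
        (W (ψinv z) / (G (ψinv z)) ^ 2)⁻¹) z := by
    intro z hz
    set x := ψinv z with hxdef
    have hNn' : HasDerivAt Nn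
        (Real.exp x * G x + Real.exp x * Gd x -
          (Real.exp x * Gd x + (Real.exp x - c_s) * Gdd x)) x := by
      rw [hNnDef]
      exact ((Real.hasDerivAt_exp x).mul (hGd' x)).sub
        (((Real.hasDerivAt_exp x).sub_const c_s).mul (hGdd' x))
    have hW' : HasDerivAt W
        (Fdd x * G x + Fd x * Gd x - (Fd x * Gd x + F x * Gdd x)) x := by
      rw [hWDef]
      exact ((hFdd' x).mul (hGd' x)).sub ((hFd' x).mul (hGdd' x))
    have hD1' := hNn'.div hW' (hWpos x).ne'
    have hcomp := hD1'.comp z (hψinvd z hz)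
    have hev : deriv H =ᶠ[𝓝 z] D1 ∘ ψinv := by
      filter_upwards [Ioi_mem_nhds hz] with y hy
      exact (hHd y hy).deriv
    have := hcomp.congr_of_eventuallyEq hev
    exact this
  -- value of the second derivative
  have hderiv2 : ∀ z : ℝ, 0 < z → deriv (deriv H) z =
      2 / σ ^ 2 * (G (ψinv z)) ^ 3 * Real.exp (ψinv z) * f_s (ψinv z) / (W (ψinv z)) ^ 2 := by
    intro z hz
    rw [(hH2 z hz).deriv]
    set x := ψinv z with hxdef
    rw [hFddEq x, hGddEq x, hfs x, hWDef]
    simp only []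
    rw [hα2, hpdef]
    have he : Real.exp (-x) = (Real.exp x)⁻¹ := Real.exp_neg x
    rw [he]
    have hG0 : G x ≠ 0 := (hGpos x).ne'
    have hW0 : Fd x * G x - F x * Gd x ≠ 0 := by
      have := hWpos x; rw [hWDef] at this; exact this.ne'
    have hex : Real.exp x ≠ 0 := (Real.exp_pos x).ne'
    have hμ0 : μ ≠ 0 := hμ.ne'
    have hσ0 : σ ≠ 0 := hσ.ne'
    simp only [hNnDef]
    generalize hw : Fd x * G x - F x * Gd x = w at hW0 ⊢
    field_simp
    subst hw
    ring
  -- f_s is strictly decreasing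
  have hfsd : ∀ x, HasDerivAt f_s (-μ - r * c_s * Real.exp (-x)) x := by
    intro x
    have hffun : f_s = fun x => (μ * θ + σ ^ 2 / 2 - r) - μ * x + r * c_s * Real.exp (-x) :=
      funext hfs
    rw [hffun]
    have h1 : HasDerivAt (fun x : ℝ => (μ * θ + σ ^ 2 / 2 - r) - μ * x) (-μ) x := by
      simpa using (((hasDerivAt_id x).const_mul μ).const_sub (μ * θ + σ ^ 2 / 2 - r))
    have h2 : HasDerivAt (fun x : ℝ => Real.exp (-x)) (-Real.exp (-x)) x := by
      have := (Real.hasDerivAt_exp (-x)).comp x (hasDerivAt_id x).neg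
      simpa [Function.comp_def] using this
    have := h1.add ((h2.const_mul (r * c_s)))
    refine this.congr_deriv ?_
    ring
  have hfs_anti : StrictAnti f_s := by
    apply strictAnti_of_deriv_neg
    intro x
    rw [(hfsd x).deriv]
    have h2 : 0 < r * c_s * Real.exp (-x) := by positivity
    linarith
  have hfs_nonneg : ∀ x, x ≤ x_s → 0 ≤ f_s x := by
    intro x hx
    rcases eq_or_lt_of_le hx with h | h
    · rw [h, hxs]
    · have := hfs_anti h; rw [hxs] at this; linarith
  have hfs_nonpos : ∀ x, x_s ≤ x → f_s x ≤ 0 := by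
    intro x hx
    rcases eq_or_lt_of_le hx with h | h
    · rw [← h, hxs]
    · have := hfs_anti h; rw [hxs] at this; linarith
  -- positivity of ψ x_s
  have hb : 0 < ψ x_s := hψpos x_s
  constructor
  · apply convexOn_of_deriv2_nonneg (convex_Ioc _ _)
    · intro z hz
      exact ((hHd z hz.1).differentiableAt.continuousAt).continuousWithinAt
    · rw [interior_Ioc]
      intro z hz
      exact (hHd z hz.1).differentiableAt.differentiableWithinAt
    · rw [interior_Ioc]
      intro z hz
      exact (hH2 z hz.1).differentiableAt.differentiableWithinAt
    · rw [interior_Ioc]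
      intro z hz
      show 0 ≤ deriv (deriv H) z
      rw [hderiv2 z hz.1]
      have hx : ψinv z < x_s := by
        have h1 : ψ (ψinv z) < ψ x_s := by rw [hinv_right z hz.1]; exact hz.2
        exact hψmono.lt_iff_lt.1 h1
      have h0 := hfs_nonneg _ hx.le
      apply div_nonneg _ (by positivity)
      have hGx := hGpos (ψinv z)
      have hex := Real.exp_pos (ψinv z)
      apply mul_nonneg _ h0
      positivity
  · apply concaveOn_of_deriv2_nonpos (convex_Ici _)
    · intro z hz
      have hz0 : 0 < z := lt_of_lt_of_le hb hz
      exact ((hHd z hz0).differentiableAt.continuousAt).continuousWithinAt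
    · rw [interior_Ici]
      intro z hz
      have hz0 : 0 < z := lt_trans hb hz
      exact (hHd z hz0).differentiableAt.differentiableWithinAt
    · rw [interior_Ici]
      intro z hz
      have hz0 : 0 < z := lt_trans hb hz
      exact (hH2 z hz0).differentiableAt.differentiableWithinAt
    · rw [interior_Ici]
      intro z hz
      have hz0 : 0 < z := lt_trans hb hz
      show deriv (deriv H) z ≤ 0
      rw [hderiv2 z hz0]
      have hx : x_s < ψinv z := by
        have h1 : ψ x_s < ψ (ψinv z) := by rw [hinv_right z hz0]; exact hz
        exact hψmono.lt_iff_lt.1 h1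
      have h0 := hfs_nonpos _ hx.le
      apply div_nonpos_of_nonpos_of_nonneg _ (by positivity)
      have hGx := hGpos (ψinv z)
      have hex := Real.exp_pos (ψinv z)
      apply mul_nonpos_of_nonneg_of_nonpos _ h0
      positivity
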